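/- Let G = H∗_(K,φ) with K a proper subgroup of H. Suppose g ∈ G and x, y ∈ H satisfy g⁻¹(yt)g = x⁻¹φ(x)t and g⁻¹hg = x⁻¹hx for all h ∈ H. Then g ∈ K. -/

import Mathlib

open HNNExtension

/-- The automorphism-induced HNN extension `H∗_(K,φ)`. -/
abbrev AutHNN (H : Type*) [Group H] (K : Subgroup H) (φ : H ≃* H) :=
  HNNExtension H K (K.map (φ : H →* H)) (φ.subgroupMap K)

open HNNExtension.NormalWord in
section
open HNNExtension.NormalWord

/-- If `t * of a * t⁻¹` lies in the base group, then `a ∈ A`. -/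
lemma aux_mem_of_t_conj_mem_range {G : Type*} [Group G] {A B : Subgroup G} {φ : A ≃* B}
    (a : G) (h : t * of a * t⁻¹ ∈ ((of : G →* HNNExtension G A B φ).range)) : a ∈ A := by
  by_contra ha
  have chain : List.Chain' (fun p q : ℤˣ × G => p.2 ∈ toSubgroup A B p.1 → p.1 = q.1)
      [((1 : ℤˣ), a), ((-1 : ℤˣ), (1 : G))] :=
    List.isChain_cons_cons.2 ⟨fun h' => absurd h' ha, List.isChain_singleton _⟩
  let w : ReducedWord G A B := ⟨1, [((1 : ℤˣ), a), ((-1 : ℤˣ), (1 : G))], chain⟩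
  have hp : w.prod φ = t * of a * t⁻¹ := by
    simp [ReducedWord.prod, w, mul_assoc]
  have := ReducedWord.toList_eq_nil_of_mem_of_range φ w (hp ▸ h)
  simp [w] at this

/-- If `z` centralizes the base group and both associated subgroups are proper, then
`z` is in the base group. -/
lemma aux_exists_of_centralizes {G : Type*} [Group G] {A B : Subgroup G} {φ : A ≃* B}
    (hA : A ≠ ⊤) (hB : B ≠ ⊤) (z : HNNExtension G A B φ)
    (hz : ∀ h : G, of h * z = z * of h) : ∃ c : G, of c = z := by
  obtain ⟨d⟩ := TransversalPair.nonempty G A B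
  set w : NormalWord d := NormalWord.equiv φ d z with hw
  have hwp : w.prod φ = z := (NormalWord.equiv φ d).symm_apply_apply z
  rcases hl : w.toList with _ | ⟨p, rest⟩
  · exact ⟨w.head, by rw [← hwp]; simp [ReducedWord.prod, hl]⟩
  · exfalso
    have hS : toSubgroup A B (-p.1) ≠ ⊤ := by
      rcases Int.units_eq_one_or (-p.1) with h | h <;> rw [h] <;> simpa
    obtain ⟨s, hs⟩ : ∃ s, s ∉ toSubgroup A B (-p.1) := by
      by_contra hc
      push_neg at hc
      exact hS ((Subgroup.eq_top_iff' _).2 hc)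
    set h : G := w.head * s⁻¹ * w.head⁻¹ with hh
    have hne : w.toList ≠ [] := by rw [hl]; simp
    set q : ℤˣ × G := w.toList.getLast hne with hq
    have hsplit : w.toList = w.toList.dropLast ++ [q] := (List.dropLast_append_getLast hne).symm
    have chain₂ : List.Chain' (fun p q : ℤˣ × G => p.2 ∈ toSubgroup A B p.1 → p.1 = q.1)
        (w.toList.dropLast ++ [(q.1, q.2 * h)]) := by
      have hc := w.chain
      rw [hsplit, List.isChain_append] at hc
      unfold List.Chain'
      rw [List.isChain_append]
      refine ⟨hc.1, List.isChain_singleton _, ?_⟩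
      intro x hx y hy
      simp only [List.head?_cons, Option.mem_def, Option.some_inj] at hy
      subst hy
      exact fun hx2 => hc.2.2 x hx q (by simp) hx2
    let w₂ : ReducedWord G A B := ⟨w.head, w.toList.dropLast ++ [(q.1, q.2 * h)], chain₂⟩
    let w₁ : ReducedWord G A B := ⟨h * w.head, w.toList, w.chain⟩
    have e1 : w₁.prod φ = of h * z := by
      rw [← hwp]
      simp [ReducedWord.prod, w₁, mul_assoc]
    have hpr : ∀ v : ReducedWord G A B, ReducedWord.prod φ v =
        of v.head * (List.map (fun x => t ^ (x.1 : ℤ) * of x.2) v.toList).prod := fun _ => rfl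
    have e2 : w₂.prod φ = z * of h := by
      rw [← hwp, hpr, hpr]
      conv_rhs => rw [hsplit]
      simp [w₂, List.map_append, mul_assoc, map_mul]
    have hprod : w₁.prod φ = w₂.prod φ := by rw [e1, e2, hz]
    have h3 := (ReducedWord.map_fst_eq_and_of_prod_eq φ hprod).2 p.1
      (by rw [show w₁.toList = w.toList from rfl, hl]; simp)
    have hmem : (h * w.head)⁻¹ * w.head ∈ toSubgroup A B (-p.1) := h3
    apply hs
    have : (h * w.head)⁻¹ * w.head = s := by
      rw [hh]
      group
    rwa [this] at hmem

end

/-- Technical conjugation lemma: if `g ∈ G` and `x, y ∈ H` satisfy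
`g⁻¹(yt)g = x⁻¹φ(x)t` and `g⁻¹hg = x⁻¹hx` for all `h : H`, then `g ∈ K`. -/
theorem conj_lemma_mem_K {H : Type*} [Group H] (K : Subgroup H) (φ : H ≃* H)
    (hK : K ≠ ⊤) (g : AutHNN H K φ) (x y : H)
    (h1 : g⁻¹ * (of y * t) * g = of (x⁻¹ * φ x) * t)
    (h2 : ∀ h : H, g⁻¹ * of h * g = of (x⁻¹ * h * x)) :
    ∃ k ∈ K, of k = g := by
  have hB : (K.map (φ : H →* H)) ≠ ⊤ := by
    intro htop
    apply hK
    have h2' : Subgroup.map (φ : H →* H) K = Subgroup.map (φ : H →* H) ⊤ := by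
      rw [htop, Subgroup.map_top_of_surjective _ φ.surjective]
    exact Subgroup.map_injective φ.injective h2'
  set z : AutHNN H K φ := g * (of x)⁻¹ with hz
  have hcent : ∀ h : H, of h * z = z * of h := by
    intro h
    have hg : of h * g = g * of (x⁻¹ * h * x) := by
      rw [← h2 h]
      group
    calc of h * (g * (of x)⁻¹) = (of h * g) * (of x)⁻¹ := by rw [mul_assoc]
      _ = g * of (x⁻¹ * h * x) * (of x)⁻¹ := by rw [hg]
      _ = (g * (of x)⁻¹) * of h := by
          simp [map_mul, mul_assoc]
  obtain ⟨c, hc⟩ := aux_exists_of_centralizes hK hB z hcent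
  have hcx : g = of (c * x) := by
    rw [map_mul, hc, hz]
    group
  have h1' : of y * t * g = g * (of (x⁻¹ * φ x) * t) := by
    rw [← h1]
    group
  rw [hcx] at h1'
  have key : t * of (c * x) * t⁻¹ ∈ ((of : H →* AutHNN H K φ).range) := by
    refine ⟨y⁻¹ * c * φ x, ?_⟩
    calc (of : H →* AutHNN H K φ) (y⁻¹ * c * φ x)
        = of y⁻¹ * (of y * t * of (c * x)) * t⁻¹ := by
          rw [h1']
          simp [map_mul, mul_assoc]
      _ = t * of (c * x) * t⁻¹ := by
          simp [map_inv, mul_assoc]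
  exact ⟨c * x, aux_mem_of_t_conj_mem_range _ key, hcx.symm⟩
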